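/- Covering preserves FC-status: (1) if F_c is an FC-family and there exists F_c' isomorphic to F_c with F_c' ⊆ closure(F), then F is an FC-family; (2) if N_c is not an FC-family and there exists N_c' isomorphic to N_c with closure(F) ⊆ closure(N_c') ∪ {∅}, then F is not an FC-family. -/
import Mathlib


variable {α : Type*} [DecidableEq α]

/-- A family is union-closed. -/
def UC (F : Finset (Finset α)) : Prop := ∀ A ∈ F, ∀ B ∈ F, A ∪ B ∈ F

/-- Number of members of `F` containing `a`. -/
def cnt (a : α) (F : Finset (Finset α)) : ℕ := (F.filter (fun A => a ∈ A)).card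

/-- Union-ucClosure: all unions of nonempty subfamilies. -/
def ucClosure (F : Finset (Finset α)) : Finset (Finset α) :=
  (F.powerset.filter (fun G => G.Nonempty)).image (fun G => G.sup id)

/-- FC-family. -/
def IsFC (Fc : Finset (Finset α)) : Prop :=
  ∀ F : Finset (Finset α), UC F → Fc ⊆ F →
    ∃ a ∈ Fc.sup id, 2 * cnt a F ≥ F.card

/-- Isomorphism of families: a bijection between their unions mapping one onto the other. -/
def Iso (F F' : Finset (Finset α)) : Prop :=
  ∃ f : α → α, Set.InjOn f (F.sup id : Finset α) ∧
    (F.sup id).image f = F'.sup id ∧ F.image (fun A => A.image f) = F'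

lemma subset_ucClosure (F : Finset (Finset α)) : F ⊆ ucClosure F := by
  intro A hA
  refine Finset.mem_image.2 ⟨{A}, ?_, by simp⟩
  simp [Finset.mem_filter, Finset.singleton_subset_iff, hA]

lemma sup_mem_uc {G : Finset (Finset α)} (hG : UC G) (s : Finset (Finset α))
    (hne : s.Nonempty) (hsub : s ⊆ G) : s.sup id ∈ G := by
  induction hne using Finset.Nonempty.cons_induction with
  | singleton a => simpa using hsub (Finset.mem_singleton_self a)
  | cons a s ha hne ih =>
      rw [Finset.sup_cons]
      exact hG _ (hsub (Finset.mem_cons_self a s))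
        _ (ih (fun x hx => hsub (Finset.mem_cons.2 (Or.inr hx))))

lemma ucClosure_subset_of_uc {F G : Finset (Finset α)} (hG : UC G) (hFG : F ⊆ G) :
    ucClosure F ⊆ G := by
  intro B hB
  rcases Finset.mem_image.1 hB with ⟨s, hs, rfl⟩
  rw [Finset.mem_filter, Finset.mem_powerset] at hs
  exact sup_mem_uc hG s hs.2 (hs.1.trans hFG)

lemma mem_ucClosure_subset {F : Finset (Finset α)} {B : Finset α} (hB : B ∈ ucClosure F) :
    B ⊆ F.sup id := by
  rcases Finset.mem_image.1 hB with ⟨s, hs, rfl⟩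
  rw [Finset.mem_filter, Finset.mem_powerset] at hs
  exact (Finset.sup_mono hs.1 : s.sup id ≤ F.sup id)

lemma iso_perm [Infinite α] {F F' : Finset (Finset α)} (h : Iso F F') :
    ∃ π : Equiv.Perm α, (F.sup id).image π = F'.sup id ∧
      F.image (fun A => A.image π) = F' := by
  obtain ⟨f, hinj, hsup, hfam⟩ := h
  set S : Set α := ↑(F.sup id) with hS
  have hlt : Cardinal.mk S < Cardinal.mk α :=
    lt_of_lt_of_le (Cardinal.lt_aleph0_of_finite S) (Cardinal.aleph0_le_mk α)
  obtain ⟨π, hπ⟩ := Cardinal.extend_function_of_lt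
    (⟨fun x : S => f x, fun x y hxy => Subtype.ext (hinj x.2 y.2 hxy)⟩ : S ↪ α)
    hlt ⟨Equiv.refl α⟩
  have hπ' : ∀ a ∈ F.sup id, π a = f a := fun a ha => hπ ⟨a, Finset.mem_coe.2 ha⟩
  refine ⟨π, ?_, ?_⟩
  · rw [← hsup]
    exact Finset.image_congr (fun a ha => hπ' a ha)
  · rw [← hfam]
    refine Finset.image_congr (fun A hA => ?_)
    exact Finset.image_congr (fun a ha => hπ' a (Finset.mem_sup.2 ⟨A, hA, ha⟩))

lemma card_image_perm (π : Equiv.Perm α) (H : Finset (Finset α)) :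
    (H.image (fun A => A.image π)).card = H.card :=
  Finset.card_image_of_injective H (Finset.image_injective π.injective)

lemma cnt_image_perm (π : Equiv.Perm α) (a : α) (H : Finset (Finset α)) :
    cnt a (H.image (fun A => A.image π.symm)) = cnt (π a) H := by
  unfold cnt
  rw [Finset.filter_image,
    Finset.card_image_of_injective _ (Finset.image_injective π.symm.injective)]
  congr 1
  apply Finset.filter_congr
  intro A _
  simp only [Finset.mem_image, eq_iff_iff]
  constructor
  · rintro ⟨b, hb, rfl⟩
    simpa using hb
  · intro hb
    exact ⟨π a, hb, by simp⟩

lemma isFC_of_perm {F F' : Finset (Finset α)} (π : Equiv.Perm α)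
    (hsup : (F.sup id).image π = F'.sup id)
    (hfam : F.image (fun A => A.image π) = F')
    (hFC : IsFC F) : IsFC F' := by
  intro H hH hF'H
  set G := H.image (fun A => A.image π.symm) with hG
  have hUCG : UC G := by
    intro A hA B hB
    rcases Finset.mem_image.1 hA with ⟨A', hA', rfl⟩
    rcases Finset.mem_image.1 hB with ⟨B', hB', rfl⟩
    exact Finset.mem_image.2 ⟨A' ∪ B', hH _ hA' _ hB', Finset.image_union _ _⟩
  have hFG : F ⊆ G := by
    intro A hA
    have hmem : A.image π ∈ H := hF'H (hfam ▸ Finset.mem_image_of_mem _ hA)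
    refine Finset.mem_image.2 ⟨A.image π, hmem, ?_⟩
    simp [Finset.image_image]
  obtain ⟨a, ha, hcnt⟩ := hFC G hUCG hFG
  refine ⟨π a, ?_, ?_⟩
  · rw [← hsup]; exact Finset.mem_image_of_mem _ ha
  · rw [← cnt_image_perm π a H]
    have hcard : G.card = H.card :=
      Finset.card_image_of_injective H (Finset.image_injective π.symm.injective)
    rw [← hG] at *
    omega
  -- note cnt a G appears in hcnt

lemma iso_isFC [Infinite α] {F F' : Finset (Finset α)} (h : Iso F F') :
    IsFC F ↔ IsFC F' := by
  obtain ⟨π, hsup, hfam⟩ := iso_perm h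
  have hsup' : (F'.sup id).image π.symm = F.sup id := by
    rw [← hsup, Finset.image_image]; simp
  have hfam' : F'.image (fun A => A.image π.symm) = F := by
    rw [← hfam, Finset.image_image]
    calc F.image ((fun A => A.image π.symm) ∘ fun A => A.image (π : α → α))
        = F.image id := Finset.image_congr (fun A _ => by simp [Finset.image_image])
      _ = F := Finset.image_id
  exact ⟨isFC_of_perm π hsup hfam, isFC_of_perm π.symm hsup' hfam'⟩

theorem covering_preserves_FC_status [Infinite α] :
    (∀ Fc F : Finset (Finset α), IsFC Fc →
      (∃ Fc' : Finset (Finset α), Iso Fc Fc' ∧ Fc' ⊆ ucClosure F) → IsFC F) ∧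
    (∀ Nc F : Finset (Finset α), ¬ IsFC Nc →
      (∃ Nc' : Finset (Finset α), Iso Nc Nc' ∧
        ucClosure F ⊆ ucClosure Nc' ∪ {(∅ : Finset α)}) → ¬ IsFC F) := by
  constructor
  · rintro Fc F hFC ⟨Fc', hiso, hsub⟩
    have hFC' : IsFC Fc' := (iso_isFC hiso).1 hFC
    intro H hH hFH
    have hclos : ucClosure F ⊆ H := ucClosure_subset_of_uc hH hFH
    obtain ⟨a, ha, hcnt⟩ := hFC' H hH (fun A hA => hclos (hsub hA))
    refine ⟨a, ?_, hcnt⟩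
    have hss : Fc'.sup id ≤ F.sup id :=
      Finset.sup_le (fun B hB => mem_ucClosure_subset (hsub hB))
    exact hss ha
  · rintro Nc F hNFC ⟨Nc', hiso, hsub⟩ hFC
    apply hNFC
    rw [iso_isFC hiso]
    intro H hH hNcH
    have hUC' : UC (insert (∅ : Finset α) H) := by
      intro A hA B hB
      rcases Finset.mem_insert.1 hA with rfl | hA
      · rcases Finset.mem_insert.1 hB with rfl | hB
        · simp
        · rw [Finset.empty_union]; exact Finset.mem_insert_of_mem hB
      · rcases Finset.mem_insert.1 hB with rfl | hB
        · rw [Finset.union_empty]; exact Finset.mem_insert_of_mem hA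
        · exact Finset.mem_insert_of_mem (hH _ hA _ hB)
    have hFH' : F ⊆ insert (∅ : Finset α) H := by
      intro A hA
      have hA2 := hsub (subset_ucClosure F hA)
      rcases Finset.mem_union.1 hA2 with h | h
      · exact Finset.mem_insert_of_mem (ucClosure_subset_of_uc hH hNcH h)
      · rw [Finset.mem_singleton] at h
        exact h ▸ Finset.mem_insert_self _ _
    obtain ⟨a, ha, hcnt⟩ := hFC _ hUC' hFH'
    have hasup : a ∈ Nc'.sup id := by
      rcases Finset.mem_sup.1 ha with ⟨A, hA, haA⟩
      have hA2 := hsub (subset_ucClosure F hA)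
      rcases Finset.mem_union.1 hA2 with h | h
      · exact mem_ucClosure_subset h haA
      · rw [Finset.mem_singleton] at h
        subst h; simp at haA
    refine ⟨a, hasup, ?_⟩
    have h1 : cnt a (insert (∅ : Finset α) H) = cnt a H := by
      unfold cnt
      rw [Finset.filter_insert]
      simp
    have h2 : H.card ≤ (insert (∅ : Finset α) H).card :=
      Finset.card_le_card (Finset.subset_insert _ _)
    rw [h1] at hcnt
    omega
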